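/- Let G be an amenable group. Then G cannot be partitioned into uncountably many pairwise disjoint left ℵ₀-large subsets; indeed, any family of pairwise disjoint left ℵ₀-large subsets of G is at most countable. -/

import Mathlib

open Pointwise

theorem amenable_disjoint_syndetic_countable {G : Type*} [Group G]
    (μ : Set G → ℝ)
    (hnonneg : ∀ A : Set G, 0 ≤ μ A)
    (hone : μ Set.univ = 1)
    (hadd : ∀ A B : Set G, Disjoint A B → μ (A ∪ B) = μ A + μ B)
    (hinv : ∀ (g : G) (A : Set G), μ (g • A) = μ A)
    (P : Set (Set G))
    (hdisj : P.PairwiseDisjoint id)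
    (hlarge : ∀ A ∈ P, ∃ F : Set G, F.Finite ∧ F * A = Set.univ) :
    P.Countable := by
  classical
  -- basic facts
  have hempty : μ ∅ = 0 := by
    have := hadd ∅ ∅ (by simp)
    simp at this
    linarith
  have mono : ∀ A B : Set G, A ⊆ B → μ A ≤ μ B := by
    intro A B h
    have hd : Disjoint A (B \ A) := disjoint_sdiff_self_right
    have : μ (A ∪ (B \ A)) = μ A + μ (B \ A) := hadd _ _ hd
    rw [Set.union_diff_cancel h] at this
    have := hnonneg (B \ A)
    linarith
  have subadd : ∀ A B : Set G, μ (A ∪ B) ≤ μ A + μ B := by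
    intro A B
    have h1 : A ∪ (B \ A) = A ∪ B := Set.union_diff_self
    have h2 : μ (A ∪ (B \ A)) = μ A + μ (B \ A) := hadd _ _ disjoint_sdiff_self_right
    have h3 : μ (B \ A) ≤ μ B := mono _ _ Set.diff_subset
    rw [h1] at h2
    linarith
  -- finite subadditivity
  have subF : ∀ (s : Finset G) (A : Set G),
      μ (⋃ g ∈ s, g • A) ≤ ∑ g ∈ s, μ (g • A) := by
    intro s A
    induction s using Finset.induction with
    | empty => simp [hempty]
    | insert a t hnm ih =>
      rw [Finset.set_biUnion_insert, Finset.sum_insert hnm]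
      calc μ (a • A ∪ ⋃ g ∈ t, g • A) ≤ μ (a • A) + μ (⋃ g ∈ t, g • A) := subadd _ _
        _ ≤ μ (a • A) + ∑ g ∈ t, μ (g • A) := by linarith
  -- finite additivity over disjoint families
  have addF : ∀ (s : Finset (Set G)), (↑s : Set (Set G)).PairwiseDisjoint id →
      μ (⋃ A ∈ s, A) = ∑ A ∈ s, μ A := by
    intro s
    induction s using Finset.induction with
    | empty => simp [hempty]
    | insert a t hnm ih =>
      intro hpd
      have hsub : (↑t : Set (Set G)) ⊆ ↑(insert a t) := by
        intro x hx; simp at hx ⊢; tauto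
      have hpd' := hpd.subset hsub
      have hdis : Disjoint a (⋃ A ∈ t, A) := by
        rw [Set.disjoint_iUnion₂_right]
        intro A hA
        have : a ≠ A := by rintro rfl; exact hnm hA
        exact hpd (by simp) (by simp [hA]) this
      rw [Finset.set_biUnion_insert, hadd _ _ hdis, Finset.sum_insert hnm, ih hpd']
  -- every member of P has positive measure
  have hpos : ∀ A ∈ P, 0 < μ A := by
    intro A hA
    obtain ⟨F, hF, hFA⟩ := hlarge A hA
    have hcover : Set.univ ⊆ ⋃ g ∈ hF.toFinset, g • A := by
      rw [← hFA]
      intro x hx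
      rw [Set.mem_mul] at hx
      obtain ⟨f, hf, a, ha, rfl⟩ := hx
      exact Set.mem_biUnion (hF.mem_toFinset.2 hf) ⟨a, ha, rfl⟩
    have h1 : (1 : ℝ) ≤ μ (⋃ g ∈ hF.toFinset, g • A) := by
      rw [← hone]; exact mono _ _ hcover
    have h2 : ∑ g ∈ hF.toFinset, μ (g • A) = (hF.toFinset.card : ℝ) * μ A := by
      rw [Finset.sum_congr rfl fun g _ => hinv g A, Finset.sum_const, nsmul_eq_mul]
    have h3 := subF hF.toFinset A
    rw [h2] at h3
    by_contra hle
    push_neg at hle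
    have hc : (0 : ℝ) ≤ (hF.toFinset.card : ℝ) := Nat.cast_nonneg _
    nlinarith
  -- each level set is finite
  have hfin : ∀ n : ℕ, {A ∈ P | 1 / (n + 1 : ℝ) ≤ μ A}.Finite := by
    intro n
    by_contra hinf
    have hinf' : {A ∈ P | 1 / (n + 1 : ℝ) ≤ μ A}.Infinite := hinf
    obtain ⟨t, hts, htc⟩ := hinf'.exists_subset_card_eq (n + 2)
    have htP : (↑t : Set (Set G)) ⊆ P := hts.trans (Set.sep_subset _ _)
    have hsum : μ (⋃ A ∈ t, A) = ∑ A ∈ t, μ A := addF t (hdisj.subset htP)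
    have hle1 : μ (⋃ A ∈ t, A) ≤ 1 := by rw [← hone]; exact mono _ _ (Set.subset_univ _)
    have hlow : ∀ A ∈ t, 1 / (n + 1 : ℝ) ≤ μ A := fun A hA => (hts hA).2
    have hsumlow : (t.card : ℝ) * (1 / (n + 1 : ℝ)) ≤ ∑ A ∈ t, μ A := by
      calc (t.card : ℝ) * (1 / (n + 1 : ℝ)) = ∑ _A ∈ t, 1 / (n + 1 : ℝ) := by
            rw [Finset.sum_const, nsmul_eq_mul]
        _ ≤ ∑ A ∈ t, μ A := Finset.sum_le_sum hlow
    rw [htc] at hsumlow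
    have hnpos : (0 : ℝ) < (n : ℝ) + 1 := by positivity
    have : ((n : ℝ) + 2) * (1 / ((n : ℝ) + 1)) ≤ 1 := by
      push_cast at hsumlow
      linarith [hsumlow, hsum, hle1]
    rw [mul_one_div, div_le_one hnpos] at this
    linarith
  -- P is a countable union of these
  have hsubset : P ⊆ ⋃ n : ℕ, {A ∈ P | 1 / (n + 1 : ℝ) ≤ μ A} := by
    intro A hA
    obtain ⟨n, hn⟩ := exists_nat_one_div_lt (hpos A hA)
    exact Set.mem_iUnion.2 ⟨n, hA, le_of_lt hn⟩
  exact (Set.countable_iUnion fun n => (hfin n).countable).mono hsubset
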